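/- Riesz–Thorin interpolation applied to local walks: if a stochastic bipartite walk operator A with stationary operator Π (also stochastic) satisfies ‖A − Π‖_{2→2} ≤ γ, then for every q ≥ 2, ‖A − Π‖_{q→q} ≤ γ^{2/q} · 2^{1−2/q}. -/

import Mathlib

open Finset BigOperators

/-- `L^q` norm with respect to the probability mass function `μ`. -/
noncomputable def pnorm {α : Type} [Fintype α] (μ : α → ℝ) (q : ℝ) (f : α → ℝ) : ℝ :=
  (∑ x, μ x * |f x| ^ q) ^ (1 / q)

open Complex in
private lemma rt_core {α β : Type} [Fintype α] [Fintype β]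
    (p : α → ℝ) (w : β → ℝ) (hp : ∀ a, 0 ≤ p a) (hw : ∀ b, 0 ≤ w b)
    (M : β → α → ℝ) (hrow : ∀ b, ∑ a, |M b a| ≤ 2)
    (γ : ℝ) (hγ : 0 < γ)
    (hL2 : ∀ f : α → ℝ, ∑ b, w b * (∑ a, M b a * f a) ^ 2 ≤ γ ^ 2 * ∑ a, p a * f a ^ 2)
    (q : ℝ) (hq : 2 ≤ q)
    (f : α → ℝ) (hf : ∑ a, p a * |f a| ^ q ≤ 1)
    (g : β → ℝ) (hg : ∑ b, w b * |g b| ^ (q / (q - 1)) ≤ 1) :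
    ∑ b, w b * g b * (∑ a, M b a * f a) ≤ 2 ^ (1 - 2 / q) * γ ^ (2 / q) := by
  have hq0 : (0:ℝ) < q := by linarith
  have hq1 : (0:ℝ) < q - 1 := by linarith
  set q' : ℝ := q / (q - 1) with hq'def
  have hq'0 : 0 < q' := div_pos hq0 hq1
  set sf : α → ℝ := fun a => f a / |f a| with hsf
  set sg : β → ℝ := fun b => g b / |g b| with hsg
  have hsf1 : ∀ a, |sf a| ≤ 1 := by
    intro a
    by_cases h : f a = 0
    · simp [hsf, h]
    · simp [hsf, abs_div, div_self (abs_ne_zero.mpr h)]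
  have hsg1 : ∀ b, |sg b| ≤ 1 := by
    intro b
    by_cases h : g b = 0
    · simp [hsg, h]
    · simp [hsg, abs_div, div_self (abs_ne_zero.mpr h)]
  set F : ℂ → α → ℂ := fun z a =>
    (sf a : ℂ) * Complex.exp (((q/2 : ℝ) : ℂ) * z * ((Real.log |f a| : ℝ) : ℂ)) with hF
  set G : ℂ → β → ℂ := fun z b =>
    (sg b : ℂ) * Complex.exp (((q' : ℝ) : ℂ) * (1 - z/2) * ((Real.log |g b| : ℝ) : ℂ)) with hG
  set V : ℂ → β → ℂ := fun z b => ∑ a, ((M b a : ℝ) : ℂ) * F z a with hV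
  set Φ : ℂ → ℂ := fun z => ∑ b, ((w b : ℝ) : ℂ) * G z b * V z b with hΦ
  have hre1 : ∀ (r s : ℝ) (z : ℂ), ((r:ℂ) * z * (s:ℂ)).re = r * z.re * s := by
    intro r s z; simp [Complex.mul_re]
  have hre2 : ∀ (r s : ℝ) (z : ℂ), ((r:ℂ) * (1 - z/2) * (s:ℂ)).re = r * (1 - z.re/2) * s := by
    intro r s z
    simp [Complex.mul_re, Complex.sub_re, Complex.div_re, Complex.normSq_apply]
  -- norm formulas
  have hFnorm : ∀ z a, ‖F z a‖ = |sf a| * Real.exp ((q/2) * z.re * Real.log |f a|) := by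
    intro z a
    rw [hF]
    simp only [norm_mul, Complex.norm_real, Real.norm_eq_abs,
      Complex.norm_exp, hre1]
  have hGnorm : ∀ z b, ‖G z b‖ = |sg b| * Real.exp (q' * (1 - z.re/2) * Real.log |g b|) := by
    intro z b
    rw [hG]
    simp only [norm_mul, Complex.norm_real, Real.norm_eq_abs,
      Complex.norm_exp, hre2]
  -- pointwise sign facts
  have hsf0 : ∀ a, f a = 0 → sf a = 0 := by intro a h; simp [hsf, h]
  have hsg0 : ∀ b, g b = 0 → sg b = 0 := by intro b h; simp [hsg, h]
  have hsfabs : ∀ a, f a ≠ 0 → |sf a| = 1 := by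
    intro a h; simp [hsf, abs_div, div_self (abs_ne_zero.mpr h)]
  have hsgabs : ∀ b, g b ≠ 0 → |sg b| = 1 := by
    intro b h; simp [hsg, abs_div, div_self (abs_ne_zero.mpr h)]
  -- edge facts
  have hF0 : ∀ z : ℂ, z.re = 0 → ∀ a, ‖F z a‖ ≤ 1 := by
    intro z hz a
    rw [hFnorm, hz]
    simp only [mul_zero, zero_mul, Real.exp_zero, mul_one]
    exact hsf1 a
  have hG0 : ∀ z : ℂ, z.re = 0 → ∀ b, ‖G z b‖ = |g b| ^ q' := by
    intro z hz b
    rw [hGnorm, hz]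
    by_cases h : g b = 0
    · simp [hsg0 b h, h, Real.zero_rpow (ne_of_gt hq'0)]
    · rw [hsgabs b h, one_mul, Real.rpow_def_of_pos (abs_pos.mpr h)]
      congr 1; ring
  have hF1 : ∀ z : ℂ, z.re = 1 → ∀ a, ‖F z a‖ ^ 2 = |f a| ^ q := by
    intro z hz a
    rw [hFnorm, hz]
    by_cases h : f a = 0
    · simp [hsf0 a h, h, Real.zero_rpow (ne_of_gt hq0)]
    · rw [hsfabs a h, one_mul, ← Real.exp_nat_mul, Real.rpow_def_of_pos (abs_pos.mpr h)]
      congr 1; push_cast; ring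
  have hG1 : ∀ z : ℂ, z.re = 1 → ∀ b, ‖G z b‖ ^ 2 = |g b| ^ q' := by
    intro z hz b
    rw [hGnorm, hz]
    by_cases h : g b = 0
    · simp [hsg0 b h, h, Real.zero_rpow (ne_of_gt hq'0)]
    · rw [hsgabs b h, one_mul, ← Real.exp_nat_mul, Real.rpow_def_of_pos (abs_pos.mpr h)]
      congr 1; push_cast; ring
  -- bound on V on the left edge
  have hV0 : ∀ z : ℂ, z.re = 0 → ∀ b, ‖V z b‖ ≤ 2 := by
    intro z hz b
    calc ‖V z b‖ ≤ ∑ a, ‖((M b a : ℝ) : ℂ) * F z a‖ := by rw [hV]; exact norm_sum_le _ _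
      _ = ∑ a, |M b a| * ‖F z a‖ := by
          apply Finset.sum_congr rfl; intro a _
          rw [norm_mul, Complex.norm_real, Real.norm_eq_abs]
      _ ≤ ∑ a, |M b a| * 1 :=
          Finset.sum_le_sum fun a _ => mul_le_mul_of_nonneg_left (hF0 z hz a) (abs_nonneg _)
      _ = ∑ a, |M b a| := by simp
      _ ≤ 2 := hrow b
  -- complex L2 bound
  have hnormsq : ∀ u : ℂ, ‖u‖ ^ 2 = u.re ^ 2 + u.im ^ 2 := by
    intro u; rw [Complex.sq_norm, Complex.normSq_apply]; ring
  have hVL2 : ∀ z : ℂ, ∑ b, w b * ‖V z b‖ ^ 2 ≤ γ ^ 2 * ∑ a, p a * ‖F z a‖ ^ 2 := by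
    intro z
    have hre : ∀ b, (V z b).re = ∑ a, M b a * (F z a).re := by
      intro b; rw [hV, Complex.re_sum]
      apply Finset.sum_congr rfl; intro a _; simp [Complex.mul_re]
    have him : ∀ b, (V z b).im = ∑ a, M b a * (F z a).im := by
      intro b; rw [hV, Complex.im_sum]
      apply Finset.sum_congr rfl; intro a _; simp [Complex.mul_im]
    have h1 := hL2 (fun a => (F z a).re)
    have h2 := hL2 (fun a => (F z a).im)
    calc ∑ b, w b * ‖V z b‖ ^ 2
        = (∑ b, w b * (∑ a, M b a * (F z a).re) ^ 2)
          + ∑ b, w b * (∑ a, M b a * (F z a).im) ^ 2 := by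
          rw [← Finset.sum_add_distrib]
          apply Finset.sum_congr rfl; intro b _
          rw [hnormsq, hre, him]; ring
      _ ≤ γ ^ 2 * (∑ a, p a * (F z a).re ^ 2) + γ ^ 2 * (∑ a, p a * (F z a).im ^ 2) :=
          add_le_add h1 h2
      _ = γ ^ 2 * ∑ a, p a * ‖F z a‖ ^ 2 := by
          rw [← mul_add, ← Finset.sum_add_distrib]
          congr 1
          apply Finset.sum_congr rfl; intro a _
          rw [hnormsq]; ring
  -- differentiability
  have hdF : ∀ a, Differentiable ℂ fun z => F z a := by
    intro a
    simp only [hF]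
    exact (differentiable_const _).mul
      (((differentiable_const _).mul differentiable_id).mul (differentiable_const _)).cexp
  have hdG : ∀ b, Differentiable ℂ fun z => G z b := by
    intro b
    simp only [hG]
    exact (differentiable_const _).mul
      (((differentiable_const _).mul ((differentiable_const _).sub
        (differentiable_id.div_const _))).mul (differentiable_const _)).cexp
  have hdV : ∀ b, Differentiable ℂ fun z => V z b := by
    intro b
    simp only [hV]
    exact Differentiable.fun_sum fun a _ => (differentiable_const _).mul (hdF a)
  have hdiff : Differentiable ℂ Φ := by
    simp only [hΦ]
    exact Differentiable.fun_sum fun b _ => ((differentiable_const _).mul (hdG b)).mul (hdV b)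
  -- boundedness on the strip
  set C : ℝ := ∑ b, w b * Real.exp (q' * |Real.log (|g b|)|)
      * ∑ a, |M b a| * Real.exp (q / 2 * |Real.log (|f a|)|) with hC
  have hbdd : ∀ z ∈ HadamardThreeLines.verticalClosedStrip 0 1, ‖Φ z‖ ≤ C := by
    intro z hz
    obtain ⟨hz0, hz1⟩ := hz
    have hFb : ∀ a, ‖F z a‖ ≤ Real.exp (q / 2 * |Real.log (|f a|)|) := by
      intro a
      rw [hFnorm]
      have h1 : Real.exp (q / 2 * z.re * Real.log |f a|)
          ≤ Real.exp (q / 2 * |Real.log (|f a|)|) := by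
        apply Real.exp_le_exp.mpr
        nlinarith [mul_nonneg (mul_nonneg (by linarith : (0:ℝ) ≤ q/2) hz0)
            (sub_nonneg.mpr (le_abs_self (Real.log |f a|))),
          mul_nonneg (mul_nonneg (by linarith : (0:ℝ) ≤ q/2)
            (by linarith : (0:ℝ) ≤ 1 - z.re)) (abs_nonneg (Real.log |f a|))]
      calc |sf a| * Real.exp (q / 2 * z.re * Real.log |f a|)
          ≤ 1 * Real.exp (q / 2 * |Real.log (|f a|)|) :=
            mul_le_mul (hsf1 a) h1 (Real.exp_nonneg _) zero_le_one
        _ = _ := one_mul _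
    have hGb : ∀ b, ‖G z b‖ ≤ Real.exp (q' * |Real.log (|g b|)|) := by
      intro b
      rw [hGnorm]
      have h1 : Real.exp (q' * (1 - z.re / 2) * Real.log |g b|)
          ≤ Real.exp (q' * |Real.log (|g b|)|) := by
        apply Real.exp_le_exp.mpr
        nlinarith [mul_nonneg (mul_nonneg hq'0.le (by linarith : (0:ℝ) ≤ 1 - z.re/2))
            (sub_nonneg.mpr (le_abs_self (Real.log |g b|))),
          mul_nonneg (mul_nonneg hq'0.le (by linarith : (0:ℝ) ≤ z.re/2))
            (abs_nonneg (Real.log |g b|))]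
      calc |sg b| * Real.exp (q' * (1 - z.re / 2) * Real.log |g b|)
          ≤ 1 * Real.exp (q' * |Real.log (|g b|)|) :=
            mul_le_mul (hsg1 b) h1 (Real.exp_nonneg _) zero_le_one
        _ = _ := one_mul _
    have hVb : ∀ b, ‖V z b‖ ≤ ∑ a, |M b a| * Real.exp (q / 2 * |Real.log (|f a|)|) := by
      intro b
      calc ‖V z b‖ ≤ ∑ a, ‖((M b a : ℝ) : ℂ) * F z a‖ := by rw [hV]; exact norm_sum_le _ _
        _ ≤ ∑ a, |M b a| * Real.exp (q / 2 * |Real.log (|f a|)|) := by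
            apply Finset.sum_le_sum; intro a _
            rw [norm_mul, Complex.norm_real, Real.norm_eq_abs]
            exact mul_le_mul_of_nonneg_left (hFb a) (abs_nonneg _)
    calc ‖Φ z‖ ≤ ∑ b, ‖((w b : ℝ) : ℂ) * G z b * V z b‖ := by rw [hΦ]; exact norm_sum_le _ _
      _ ≤ C := by
          rw [hC]
          apply Finset.sum_le_sum; intro b _
          rw [norm_mul, norm_mul, Complex.norm_real, Real.norm_eq_abs, _root_.abs_of_nonneg (hw b)]
          apply mul_le_mul
          · exact mul_le_mul_of_nonneg_left (hGb b) (hw b)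
          · exact hVb b
          · exact norm_nonneg _
          · have := hw b; positivity
  have hBdd : BddAbove ((norm ∘ Φ) '' HadamardThreeLines.verticalClosedStrip 0 1) := by
    refine ⟨C, ?_⟩
    rintro x ⟨z, hz, rfl⟩
    exact hbdd z hz
  -- edge bound at re = 0
  have hedge0 : ∀ z ∈ Complex.re ⁻¹' {(0:ℝ)}, ‖Φ z‖ ≤ 2 := by
    intro z hz
    have hz0 : z.re = 0 := hz
    calc ‖Φ z‖ ≤ ∑ b, ‖((w b : ℝ) : ℂ) * G z b * V z b‖ := by rw [hΦ]; exact norm_sum_le _ _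
      _ = ∑ b, w b * ‖G z b‖ * ‖V z b‖ := by
          apply Finset.sum_congr rfl; intro b _
          rw [norm_mul, norm_mul, Complex.norm_real, Real.norm_eq_abs, _root_.abs_of_nonneg (hw b)]
      _ ≤ ∑ b, w b * |g b| ^ q' * 2 := by
          apply Finset.sum_le_sum; intro b _
          apply mul_le_mul (le_of_eq ?_) (hV0 z hz0 b) (norm_nonneg _) ?_
          · rw [hG0 z hz0 b]
          · have := hw b; positivity
      _ = 2 * ∑ b, w b * |g b| ^ q' := by rw [Finset.mul_sum]; apply Finset.sum_congr rfl; intros; ring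
      _ ≤ 2 * 1 := by linarith
      _ = 2 := mul_one 2
  -- edge bound at re = 1
  have hedge1 : ∀ z ∈ Complex.re ⁻¹' {(1:ℝ)}, ‖Φ z‖ ≤ γ := by
    intro z hz
    have hz1 : z.re = 1 := hz
    have hGsum : ∑ b, w b * ‖G z b‖ ^ 2 ≤ 1 := by
      calc ∑ b, w b * ‖G z b‖ ^ 2 = ∑ b, w b * |g b| ^ q' := by
            apply Finset.sum_congr rfl; intro b _; rw [hG1 z hz1 b]
        _ ≤ 1 := hg
    have hFsum : ∑ a, p a * ‖F z a‖ ^ 2 ≤ 1 := by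
      calc ∑ a, p a * ‖F z a‖ ^ 2 = ∑ a, p a * |f a| ^ q := by
            apply Finset.sum_congr rfl; intro a _; rw [hF1 z hz1 a]
        _ ≤ 1 := hf
    have hVsum : ∑ b, w b * ‖V z b‖ ^ 2 ≤ γ ^ 2 := by
      calc ∑ b, w b * ‖V z b‖ ^ 2 ≤ γ ^ 2 * ∑ a, p a * ‖F z a‖ ^ 2 := hVL2 z
        _ ≤ γ ^ 2 * 1 := by
            apply mul_le_mul_of_nonneg_left hFsum (by positivity)
        _ = γ ^ 2 := mul_one _
    have hXnn : 0 ≤ ∑ b, w b * ‖G z b‖ * ‖V z b‖ := by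
      apply Finset.sum_nonneg; intro b _
      have := hw b; positivity
    have key : (∑ b, w b * ‖G z b‖ * ‖V z b‖) ^ 2 ≤ γ ^ 2 := by
      have cs := Finset.sum_mul_sq_le_sq_mul_sq Finset.univ
        (fun b => Real.sqrt (w b) * ‖G z b‖) (fun b => Real.sqrt (w b) * ‖V z b‖)
      have e1 : ∑ b, (Real.sqrt (w b) * ‖G z b‖) * (Real.sqrt (w b) * ‖V z b‖)
          = ∑ b, w b * ‖G z b‖ * ‖V z b‖ := by
        apply Finset.sum_congr rfl; intro b _
        rw [mul_mul_mul_comm, Real.mul_self_sqrt (hw b)]; ring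
      have e2 : ∑ b, (Real.sqrt (w b) * ‖G z b‖) ^ 2 = ∑ b, w b * ‖G z b‖ ^ 2 := by
        apply Finset.sum_congr rfl; intro b _
        rw [mul_pow, Real.sq_sqrt (hw b)]
      have e3 : ∑ b, (Real.sqrt (w b) * ‖V z b‖) ^ 2 = ∑ b, w b * ‖V z b‖ ^ 2 := by
        apply Finset.sum_congr rfl; intro b _
        rw [mul_pow, Real.sq_sqrt (hw b)]
      rw [e1, e2, e3] at cs
      calc (∑ b, w b * ‖G z b‖ * ‖V z b‖) ^ 2
          ≤ (∑ b, w b * ‖G z b‖ ^ 2) * ∑ b, w b * ‖V z b‖ ^ 2 := cs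
        _ ≤ 1 * γ ^ 2 := by
            apply mul_le_mul hGsum hVsum ?_ zero_le_one
            apply Finset.sum_nonneg; intro b _
            have := hw b; positivity
        _ = γ ^ 2 := one_mul _
    have hXle : ∑ b, w b * ‖G z b‖ * ‖V z b‖ ≤ γ := by nlinarith
    calc ‖Φ z‖ ≤ ∑ b, ‖((w b : ℝ) : ℂ) * G z b * V z b‖ := by rw [hΦ]; exact norm_sum_le _ _
      _ = ∑ b, w b * ‖G z b‖ * ‖V z b‖ := by
          apply Finset.sum_congr rfl; intro b _
          rw [norm_mul, norm_mul, Complex.norm_real, Real.norm_eq_abs, _root_.abs_of_nonneg (hw b)]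
      _ ≤ γ := hXle
  -- apply Hadamard three lines
  set θ : ℝ := 2 / q with hθ
  have hθmem : ((θ : ℝ) : ℂ) ∈ HadamardThreeLines.verticalClosedStrip 0 1 := by
    simp only [HadamardThreeLines.verticalClosedStrip, Set.mem_preimage, Complex.ofReal_re,
      Set.mem_Icc]
    constructor
    · positivity
    · rw [hθ, div_le_one hq0]; exact hq
  have hdc : DiffContOnCl ℂ Φ (HadamardThreeLines.verticalStrip 0 1) := hdiff.diffContOnCl
  have had := Complex.HadamardThreeLines.norm_le_interp_of_mem_verticalClosedStrip₀₁' Φ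
    hθmem hdc hBdd hedge0 hedge1
  -- evaluate Φ at θ
  have hFθ : ∀ a, F ((θ : ℝ) : ℂ) a = ((f a : ℝ) : ℂ) := by
    intro a
    by_cases h : f a = 0
    · simp [hF, hsf0 a h, h]
    · simp only [hF]
      have h1 : q / 2 * θ = 1 := by rw [hθ]; field_simp
      have e : ((q/2 : ℝ) : ℂ) * ((θ : ℝ) : ℂ) * ((Real.log |f a| : ℝ) : ℂ)
          = ((Real.log |f a| : ℝ) : ℂ) := by
        rw [← Complex.ofReal_mul, ← Complex.ofReal_mul, h1, one_mul]
      rw [e, ← Complex.ofReal_exp, Real.exp_log (abs_pos.mpr h), ← Complex.ofReal_mul, hsf]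
      rw [div_mul_cancel₀ _ (abs_ne_zero.mpr h)]
  have hGθ : ∀ b, G ((θ : ℝ) : ℂ) b = ((g b : ℝ) : ℂ) := by
    intro b
    by_cases h : g b = 0
    · simp [hG, hsg0 b h, h]
    · simp only [hG]
      have h1 : q' * (1 - θ/2) = 1 := by
        rw [hθ, hq'def]; field_simp
      have e : ((q' : ℝ) : ℂ) * (1 - ((θ : ℝ) : ℂ)/2) * ((Real.log |g b| : ℝ) : ℂ)
          = ((Real.log |g b| : ℝ) : ℂ) := by
        calc ((q' : ℝ) : ℂ) * (1 - ((θ : ℝ) : ℂ)/2) * ((Real.log |g b| : ℝ) : ℂ)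
            = ((q' * (1 - θ/2) * Real.log |g b| : ℝ) : ℂ) := by push_cast; ring
          _ = _ := by rw [h1, one_mul]
      rw [e, ← Complex.ofReal_exp, Real.exp_log (abs_pos.mpr h), ← Complex.ofReal_mul, hsg]
      rw [div_mul_cancel₀ _ (abs_ne_zero.mpr h)]
  have hΦθ : Φ ((θ : ℝ) : ℂ) = ((∑ b, w b * g b * (∑ a, M b a * f a) : ℝ) : ℂ) := by
    rw [hΦ]
    simp only [hV, hFθ, hGθ]
    push_cast
    rfl
  have hle : ∑ b, w b * g b * (∑ a, M b a * f a) ≤ ‖Φ ((θ : ℝ) : ℂ)‖ := by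
    rw [hΦθ, Complex.norm_real, Real.norm_eq_abs]
    exact le_abs_self _
  have hre : (((θ : ℝ) : ℂ)).re = θ := Complex.ofReal_re θ
  rw [hre] at had
  calc ∑ b, w b * g b * (∑ a, M b a * f a) ≤ ‖Φ ((θ : ℝ) : ℂ)‖ := hle
    _ ≤ 2 ^ (1 - θ) * γ ^ θ := had
    _ = 2 ^ (1 - 2/q) * γ ^ (2/q) := by rw [hθ]

/-- Riesz–Thorin applied to stochastic walks. If a Markov
(stochastic, measure-preserving) operator `A` with stationary operator `Π`
satisfies `‖A − Π‖_{2→2} ≤ γ`, then for every `q ≥ 2`,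
`‖A − Π‖_{q→q} ≤ γ^{2/q} · 2^{1−2/q}`. -/
theorem riesz_thorin_walk {α β : Type} [Fintype α] [Fintype β]
    (p : α → ℝ) (w : β → ℝ) (hp : ∀ a, 0 ≤ p a) (hw : ∀ b, 0 ≤ w b)
    (hp1 : ∑ a, p a = 1) (hw1 : ∑ b, w b = 1)
    (A : (α → ℝ) → β → ℝ) (hlin : IsLinearMap ℝ A)
    (hpos : ∀ f, (∀ a, 0 ≤ f a) → ∀ b, 0 ≤ A f b)
    (hone : A (fun _ => 1) = fun _ => 1)
    (hstat : ∀ f, ∑ b, w b * A f b = ∑ a, p a * f a)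
    (γ : ℝ) (hγ : 0 ≤ γ)
    (h2 : ∀ f, pnorm w 2 (fun b => A f b - ∑ a, p a * f a) ≤ γ * pnorm p 2 f) :
    ∀ q : ℝ, 2 ≤ q → ∀ f,
      pnorm w q (fun b => A f b - ∑ a, p a * f a)
        ≤ γ ^ ((2:ℝ)/q) * 2 ^ (1 - (2:ℝ)/q) * pnorm p q f := by
  classical
  intro q hq f
  have hq0 : (0:ℝ) < q := by linarith
  have hq1 : (0:ℝ) < q - 1 := by linarith
  -- |x| ^ (2:ℝ) = x ^ 2
  have habs2 : ∀ x : ℝ, |x| ^ (2:ℝ) = x ^ 2 := by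
    intro x
    rw [show (2:ℝ) = ((2:ℕ):ℝ) by norm_num, Real.rpow_natCast, sq_abs]
  -- if the L2-pnorm of v vanishes then the Lq-pnorm of v vanishes
  have hkill : ∀ v : β → ℝ, pnorm w 2 v ≤ 0 → pnorm w q v = 0 := by
    intro v hv
    have hS2 : (0:ℝ) ≤ ∑ b, w b * |v b| ^ (2:ℝ) := by
      apply Finset.sum_nonneg; intro b _
      have h1 := hw b
      have h2 : (0:ℝ) ≤ |v b| ^ (2:ℝ) := Real.rpow_nonneg (abs_nonneg _) _
      positivity
    have hzero : ∑ b, w b * |v b| ^ (2:ℝ) = 0 := by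
      have h1 : pnorm w 2 v = 0 := le_antisymm hv (Real.rpow_nonneg hS2 _)
      rw [pnorm] at h1
      exact (Real.rpow_eq_zero hS2 (by norm_num)).mp h1
    have hterm : ∀ b ∈ Finset.univ, w b * |v b| ^ (2:ℝ) = 0 := by
      rw [← Finset.sum_eq_zero_iff_of_nonneg]
      · exact hzero
      · intro b _
        have h1 := hw b
        have h2 : (0:ℝ) ≤ |v b| ^ (2:ℝ) := Real.rpow_nonneg (abs_nonneg _) _
        positivity
    rw [pnorm]
    have hsum : ∑ b, w b * |v b| ^ q = 0 := by
      apply Finset.sum_eq_zero; intro b _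
      rcases mul_eq_zero.mp (hterm b (Finset.mem_univ b)) with h | h
      · rw [h, zero_mul]
      · have hv0 : v b = 0 := by
          have := (Real.rpow_eq_zero (abs_nonneg _) (by norm_num)).mp h
          exact abs_eq_zero.mp this
        rw [hv0]
        simp [Real.zero_rpow (ne_of_gt hq0)]
    rw [hsum, Real.zero_rpow (by positivity : (1:ℝ)/q ≠ 0)]
  -- kernel representation
  set e : α → α → ℝ := fun a x => if x = a then 1 else 0 with he
  set K : β → α → ℝ := fun b a => A (e a) b with hK
  set M : β → α → ℝ := fun b a => K b a - p a with hM
  let L : (α → ℝ) →ₗ[ℝ] (β → ℝ) := IsLinearMap.mk' A hlin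
  have hrepr : ∀ h : α → ℝ, ∀ b, A h b = ∑ a, K b a * h a := by
    intro h b
    have hdecomp : h = ∑ a, h a • e a := by
      funext x
      rw [Finset.sum_apply]
      simp only [he, Pi.smul_apply, smul_eq_mul, mul_ite, mul_one, mul_zero]
      rw [Finset.sum_ite_eq Finset.univ x h]
      simp
    have : A h = ∑ a, h a • A (e a) := by
      conv_lhs => rw [hdecomp]
      show L (∑ a, h a • e a) = _
      rw [map_sum]
      apply Finset.sum_congr rfl; intro a _
      rw [map_smul]
      rfl
    rw [this, Finset.sum_apply]
    apply Finset.sum_congr rfl; intro a _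
    simp [hK, mul_comm]
  have hKpos : ∀ b a, 0 ≤ K b a := by
    intro b a
    apply hpos
    intro x
    simp only [he]
    split <;> norm_num
  have hKrow : ∀ b, ∑ a, K b a = 1 := by
    intro b
    have h1 := hrepr (fun _ => 1) b
    rw [hone] at h1
    simpa using h1.symm
  have hrow : ∀ b, ∑ a, |M b a| ≤ 2 := by
    intro b
    calc ∑ a, |M b a| ≤ ∑ a, (K b a + p a) := by
          apply Finset.sum_le_sum; intro a _
          simp only [hM]
          calc |K b a - p a| ≤ |K b a| + |p a| := abs_sub _ _
            _ = K b a + p a := by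
                rw [abs_of_nonneg (hKpos b a), abs_of_nonneg (hp a)]
      _ = 1 + 1 := by rw [Finset.sum_add_distrib, hKrow b, hp1]
      _ = 2 := by norm_num
  have hTrepr : ∀ h : α → ℝ, ∀ b, A h b - ∑ a, p a * h a = ∑ a, M b a * h a := by
    intro h b
    rw [hrepr h b, ← Finset.sum_sub_distrib]
    apply Finset.sum_congr rfl; intro a _
    simp only [hM]; ring
  -- squared L2 bound
  have hL2' : ∀ h : α → ℝ, ∑ b, w b * (∑ a, M b a * h a) ^ 2 ≤ γ ^ 2 * ∑ a, p a * h a ^ 2 := by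
    intro h
    have hX : (0:ℝ) ≤ ∑ b, w b * |A h b - ∑ a, p a * h a| ^ (2:ℝ) := by
      apply Finset.sum_nonneg; intro b _
      have h1 := hw b
      have h2 : (0:ℝ) ≤ |A h b - ∑ a, p a * h a| ^ (2:ℝ) := Real.rpow_nonneg (abs_nonneg _) _
      positivity
    have hY : (0:ℝ) ≤ ∑ a, p a * |h a| ^ (2:ℝ) := by
      apply Finset.sum_nonneg; intro a _
      have h1 := hp a
      have h2 : (0:ℝ) ≤ |h a| ^ (2:ℝ) := Real.rpow_nonneg (abs_nonneg _) _
      positivity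
    have key := h2 h
    rw [pnorm, pnorm] at key
    have hsq : ∀ X : ℝ, 0 ≤ X → (X ^ ((1:ℝ)/2)) ^ 2 = X := by
      intro X hX
      rw [← Real.rpow_natCast (X ^ ((1:ℝ)/2)) 2, ← Real.rpow_mul hX]
      norm_num
    have key2 : ∑ b, w b * |A h b - ∑ a, p a * h a| ^ (2:ℝ)
        ≤ γ ^ 2 * ∑ a, p a * |h a| ^ (2:ℝ) := by
      have h1 : ((∑ b, w b * |A h b - ∑ a, p a * h a| ^ (2:ℝ)) ^ ((1:ℝ)/2)) ^ 2
          ≤ (γ * (∑ a, p a * |h a| ^ (2:ℝ)) ^ ((1:ℝ)/2)) ^ 2 := by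
        apply pow_le_pow_left₀ (Real.rpow_nonneg hX _) key
      rwa [hsq _ hX, mul_pow, hsq _ hY] at h1
    calc ∑ b, w b * (∑ a, M b a * h a) ^ 2
        = ∑ b, w b * |A h b - ∑ a, p a * h a| ^ (2:ℝ) := by
          apply Finset.sum_congr rfl; intro b _
          rw [habs2, hTrepr h b]
      _ ≤ γ ^ 2 * ∑ a, p a * |h a| ^ (2:ℝ) := key2
      _ = γ ^ 2 * ∑ a, p a * h a ^ 2 := by
          congr 1
          apply Finset.sum_congr rfl; intro a _
          rw [habs2]
  -- degenerate case γ = 0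
  rcases eq_or_lt_of_le hγ with hγ0 | hγpos
  · have hkilled : pnorm w q (fun b => A f b - ∑ a, p a * f a) = 0 := by
      apply hkill
      calc pnorm w 2 (fun b => A f b - ∑ a, p a * f a) ≤ γ * pnorm p 2 f := h2 f
        _ = 0 := by rw [← hγ0, zero_mul]
    rw [hkilled, ← hγ0, Real.zero_rpow (by positivity : (2:ℝ)/q ≠ 0), zero_mul, zero_mul]
  -- main case
  set Sf : ℝ := ∑ a, p a * |f a| ^ q with hSf
  have hSfnn : (0:ℝ) ≤ Sf := by
    apply Finset.sum_nonneg; intro a _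
    have h1 := hp a
    have h2 : (0:ℝ) ≤ |f a| ^ q := Real.rpow_nonneg (abs_nonneg _) _
    positivity
  rcases eq_or_lt_of_le hSfnn with hSf0 | hSfpos
  · -- f has zero norm
    have hterm : ∀ a ∈ Finset.univ, p a * |f a| ^ q = 0 := by
      rw [← Finset.sum_eq_zero_iff_of_nonneg]
      · exact hSf0.symm
      · intro a _
        have h1 := hp a
        have h2 : (0:ℝ) ≤ |f a| ^ q := Real.rpow_nonneg (abs_nonneg _) _
        positivity
    have hp2 : pnorm p 2 f = 0 := by
      rw [pnorm]
      have : ∑ a, p a * |f a| ^ (2:ℝ) = 0 := by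
        apply Finset.sum_eq_zero; intro a _
        rcases mul_eq_zero.mp (hterm a (Finset.mem_univ a)) with h | h
        · rw [h, zero_mul]
        · have hf0 : f a = 0 := by
            have := (Real.rpow_eq_zero (abs_nonneg _) (ne_of_gt hq0)).mp h
            exact abs_eq_zero.mp this
          rw [hf0]
          simp
      rw [this, Real.zero_rpow (by norm_num : (1:ℝ)/2 ≠ 0)]
    have hkilled : pnorm w q (fun b => A f b - ∑ a, p a * f a) = 0 := by
      apply hkill
      calc pnorm w 2 (fun b => A f b - ∑ a, p a * f a) ≤ γ * pnorm p 2 f := h2 f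
        _ = 0 := by rw [hp2, mul_zero]
    rw [hkilled]
    have h1 : (0:ℝ) ≤ γ ^ ((2:ℝ)/q) := Real.rpow_nonneg hγ _
    have h2 : (0:ℝ) ≤ (2:ℝ) ^ (1 - (2:ℝ)/q) := Real.rpow_nonneg (by norm_num) _
    have h3 : (0:ℝ) ≤ pnorm p q f := Real.rpow_nonneg hSfnn _
    positivity
  -- now Sf > 0 and γ > 0
  set Nf : ℝ := Sf ^ ((1:ℝ)/q) with hNf
  have hNfpos : 0 < Nf := Real.rpow_pos_of_pos hSfpos _
  have hNfq : Nf ^ q = Sf := by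
    rw [hNf, ← Real.rpow_mul hSfnn]
    rw [one_div_mul_cancel (ne_of_gt hq0), Real.rpow_one]
  set f' : α → ℝ := fun a => f a / Nf with hf'
  have hf'norm : ∑ a, p a * |f' a| ^ q = 1 := by
    have : ∀ a, |f' a| ^ q = |f a| ^ q / Nf ^ q := by
      intro a
      rw [hf']
      simp only [abs_div, abs_of_pos hNfpos]
      rw [Real.div_rpow (abs_nonneg _) hNfpos.le]
    calc ∑ a, p a * |f' a| ^ q = ∑ a, p a * |f a| ^ q / Nf ^ q := by
          apply Finset.sum_congr rfl; intro a _; rw [this a]; ring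
      _ = Sf / Nf ^ q := by rw [← Finset.sum_div, hSf]
      _ = 1 := by rw [hNfq, div_self (ne_of_gt hSfpos)]
  have hTf' : ∀ b, A f' b - ∑ a, p a * f' a = (A f b - ∑ a, p a * f a) / Nf := by
    intro b
    have hA : A f' = Nf⁻¹ • A f := by
      have : f' = Nf⁻¹ • f := by
        funext a; simp [hf', div_eq_inv_mul]
      rw [this, hlin.map_smul]
    have hsum : ∑ a, p a * f' a = (∑ a, p a * f a) / Nf := by
      rw [Finset.sum_div]
      apply Finset.sum_congr rfl; intro a _
      simp only [hf']; ring
    rw [hA, hsum]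
    simp [div_eq_inv_mul, mul_sub]
  set u : β → ℝ := fun b => A f' b - ∑ a, p a * f' a with hu
  set Su : ℝ := ∑ b, w b * |u b| ^ q with hSu
  have hSunn : (0:ℝ) ≤ Su := by
    apply Finset.sum_nonneg; intro b _
    have h1 := hw b
    have h2 : (0:ℝ) ≤ |u b| ^ q := Real.rpow_nonneg (abs_nonneg _) _
    positivity
  set Nu : ℝ := Su ^ ((1:ℝ)/q) with hNu
  -- the lhs equals Nf * Nu
  have hscale : pnorm w q (fun b => A f b - ∑ a, p a * f a) = Nf * Nu := by
    rw [pnorm]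
    have hterm : ∀ b, |A f b - ∑ a, p a * f a| ^ q = Nf ^ q * |u b| ^ q := by
      intro b
      have : A f b - ∑ a, p a * f a = Nf * u b := by
        rw [hu]
        simp only [hTf' b]
        rw [mul_div_cancel₀ _ (ne_of_gt hNfpos)]
      rw [this, abs_mul, abs_of_pos hNfpos, Real.mul_rpow hNfpos.le (abs_nonneg _)]
    calc (∑ b, w b * |A f b - ∑ a, p a * f a| ^ q) ^ ((1:ℝ)/q)
        = (Nf ^ q * Su) ^ ((1:ℝ)/q) := by
          congr 1
          rw [hSu, Finset.mul_sum]
          apply Finset.sum_congr rfl; intro b _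
          rw [hterm b]; ring
      _ = Nf * Nu := by
          rw [Real.mul_rpow (by positivity) hSunn, hNu, ← Real.rpow_mul hNfpos.le]
          rw [mul_one_div, div_self (ne_of_gt hq0), Real.rpow_one]
  have hpnf : pnorm p q f = Nf := rfl
  rw [hscale, hpnf]
  rw [mul_comm (γ ^ ((2:ℝ)/q) * 2 ^ (1 - (2:ℝ)/q)) Nf]
  apply mul_le_mul_of_nonneg_left _ hNfpos.le
  -- remains : Nu ≤ γ ^ (2/q) * 2 ^ (1 - 2/q)
  rcases eq_or_lt_of_le hSunn with hSu0 | hSupos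
  · rw [hNu, ← hSu0, Real.zero_rpow (by positivity : (1:ℝ)/q ≠ 0)]
    have h1 : (0:ℝ) ≤ γ ^ ((2:ℝ)/q) := Real.rpow_nonneg hγ _
    have h2 : (0:ℝ) ≤ (2:ℝ) ^ (1 - (2:ℝ)/q) := Real.rpow_nonneg (by norm_num) _
    positivity
  have hNupos : 0 < Nu := Real.rpow_pos_of_pos hSupos _
  have hNuq : Nu ^ q = Su := by
    rw [hNu, ← Real.rpow_mul hSunn]
    rw [one_div_mul_cancel (ne_of_gt hq0), Real.rpow_one]
  -- dual function g
  set g : β → ℝ := fun b => (u b * |u b| ^ (q - 2)) / Nu ^ (q - 1) with hg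
  have hgabs : ∀ b, |g b| ^ (q/(q-1)) = |u b| ^ q / Su := by
    intro b
    by_cases h : u b = 0
    · rw [hg]
      simp only [h, abs_zero, zero_mul, zero_div, abs_zero]
      rw [Real.zero_rpow (by positivity : q/(q-1) ≠ 0),
        Real.zero_rpow (ne_of_gt hq0), zero_div]
    · have hub : 0 < |u b| := abs_pos.mpr h
      have e1 : |g b| = |u b| ^ (q - 1) / Nu ^ (q - 1) := by
        rw [hg, abs_div, abs_mul, abs_of_pos (Real.rpow_pos_of_pos hNupos _)]
        congr 1
        rw [show |(|u b| ^ (q-2))| = |u b| ^ (q-2) from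
          abs_of_nonneg (Real.rpow_nonneg (abs_nonneg _) _)]
        rw [← Real.rpow_one_add' (abs_nonneg _) (by linarith : 1 + (q-2) ≠ 0)]
        congr 1; ring
      rw [e1, Real.div_rpow (Real.rpow_nonneg (abs_nonneg _) _)
        (Real.rpow_nonneg hNupos.le _)]
      rw [← Real.rpow_mul (abs_nonneg _), ← Real.rpow_mul hNupos.le]
      have he : (q - 1) * (q/(q-1)) = q := by field_simp
      rw [he, hNuq]
  have hgnorm : ∑ b, w b * |g b| ^ (q/(q-1)) ≤ 1 := by
    have : ∑ b, w b * |g b| ^ (q/(q-1)) = Su / Su := by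
      calc ∑ b, w b * |g b| ^ (q/(q-1)) = ∑ b, (w b * |u b| ^ q) / Su := by
            apply Finset.sum_congr rfl; intro b _; rw [hgabs b]; ring
        _ = Su / Su := by rw [← Finset.sum_div, ← hSu]
    rw [this, div_self (ne_of_gt hSupos)]
  have hgu : ∑ b, w b * g b * u b = Nu := by
    have hterm : ∀ b, g b * u b = |u b| ^ q / Nu ^ (q - 1) := by
      intro b
      by_cases h : u b = 0
      · rw [hg]
        simp only [h, abs_zero, zero_mul, zero_div, mul_zero]
        rw [Real.zero_rpow (ne_of_gt hq0), zero_div]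
      · have hub : 0 < |u b| := abs_pos.mpr h
        rw [hg]
        have : u b * |u b| ^ (q - 2) * u b = |u b| ^ q := by
          rw [show u b * |u b| ^ (q-2) * u b = (u b * u b) * |u b| ^ (q-2) by ring]
          rw [← sq, ← sq_abs, ← Real.rpow_natCast |u b| 2,
            ← Real.rpow_add hub]
          norm_num
        rw [div_mul_eq_mul_div, this]
    have hNuq1 : Nu ^ (q - 1) = Su ^ ((q-1)/q) := by
      rw [hNu, ← Real.rpow_mul hSunn]
      congr 1; field_simp
    calc ∑ b, w b * g b * u b = ∑ b, w b * |u b| ^ q / Nu ^ (q-1) := by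
          apply Finset.sum_congr rfl; intro b _
          rw [mul_assoc, hterm b]; ring
      _ = Su / Nu ^ (q-1) := by rw [← Finset.sum_div, hSu]
      _ = Nu := by
          rw [hNuq1]
          nth_rewrite 1 [← Real.rpow_one Su]
          rw [← Real.rpow_sub hSupos, hNu]
          congr 1; field_simp; ring
  -- apply the core interpolation bound
  have hcore := rt_core p w hp hw M hrow γ hγpos hL2' q hq f' (le_of_eq hf'norm) g hgnorm
  have hrepr' : ∀ b, ∑ a, M b a * f' a = u b := by
    intro b
    rw [hu]
    exact (hTrepr f' b).symm
  calc Nu = ∑ b, w b * g b * u b := hgu.symm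
    _ = ∑ b, w b * g b * (∑ a, M b a * f' a) := by
        apply Finset.sum_congr rfl; intro b _; rw [hrepr' b]
    _ ≤ 2 ^ (1 - 2/q) * γ ^ (2/q) := hcore
    _ = γ ^ ((2:ℝ)/q) * 2 ^ (1 - (2:ℝ)/q) := by ring
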